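/- Suppose Y = r(X) + ε where the error ε is independent of the covariate X, and suppose responses are missing at random (MAR), i.e. the conditional expectation of the indicator δ given (X, Y) equals π(X) for a measurable function π of X alone. Then ε is independent of the pair (X, δ). -/

import Mathlib

open MeasureTheory ProbabilityTheory

/-- In the nonparametric regression model `Y = r(X) + ε` with error `ε`
independent of the covariate `X`, if responses are missing at random (the conditional
expectation of the indicator `δ` given `(X, Y)` equals `π(X)` for a measurable `π` of `X`
alone), then `ε` is independent of the pair `(X, δ)`. -/
theorem error_indep_of_MAR
    {Ω : Type*} [MeasurableSpace Ω] (μ : Measure Ω) [IsProbabilityMeasure μ]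
    {m : ℕ} (X : Ω → (Fin m → ℝ)) (ε : Ω → ℝ) (δ : Ω → ℝ) (Y : Ω → ℝ)
    (r : (Fin m → ℝ) → ℝ) (π : (Fin m → ℝ) → ℝ)
    (hX : Measurable X) (hε : Measurable ε) (hδ : Measurable δ)
    (hr : Measurable r) (hπ : Measurable π)
    (hδ01 : ∀ ω, δ ω = 0 ∨ δ ω = 1)
    (hY : ∀ ω, Y ω = r (X ω) + ε ω)
    (hindep : IndepFun ε X μ)
    (hMAR : MeasureTheory.condExp
        (MeasurableSpace.comap (fun ω => (X ω, Y ω)) inferInstance) μ δ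
        =ᵐ[μ] fun ω => π (X ω)) :
    IndepFun ε (fun ω => (X ω, δ ω)) μ := by
  classical
  have hYm : Measurable Y := by
    have hYe : Y = fun ω => r (X ω) + ε ω := funext hY
    rw [hYe]; exact (hr.comp hX).add hε
  have hm : MeasurableSpace.comap (fun ω => (X ω, Y ω)) inferInstance
      ≤ ‹MeasurableSpace Ω› := (hX.prodMk hYm).comap_le
  haveI : SigmaFinite (μ.trim hm) := by infer_instance
  -- δ is integrable
  have hδint : Integrable δ μ := by
    refine ⟨hδ.aestronglyMeasurable, ?_⟩
    apply HasFiniteIntegral.of_bounded (C := (1:ℝ))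
    filter_upwards with ω
    rcases hδ01 ω with h | h <;> simp [h]
  -- both `ε` and `X` are sub-σ-algebra measurable in the set sense
  have hεsub : ∀ {A : Set ℝ}, MeasurableSet A →
      MeasurableSet[MeasurableSpace.comap (fun ω => (X ω, Y ω)) inferInstance] (ε ⁻¹' A) := by
    intro A hA
    refine ⟨(fun p : (Fin m → ℝ) × ℝ => p.2 - r p.1) ⁻¹' A,
      (measurable_snd.sub (hr.comp measurable_fst)) hA, ?_⟩
    ext ω; simp [hY ω]
  have hXsub : ∀ {C : Set (Fin m → ℝ)}, MeasurableSet C →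
      MeasurableSet[MeasurableSpace.comap (fun ω => (X ω, Y ω)) inferInstance] (X ⁻¹' C) := by
    intro C hC
    exact ⟨C ×ˢ Set.univ, hC.prod MeasurableSet.univ, by ext ω; simp⟩
  -- MAR: integrals of δ over sub-σ-algebra sets coincide with integrals of π ∘ X
  have hcond : ∀ (s : Set Ω),
      MeasurableSet[MeasurableSpace.comap (fun ω => (X ω, Y ω)) inferInstance] s →
      ∫ ω in s, δ ω ∂μ = ∫ ω in s, π (X ω) ∂μ := by
    intro s hs
    rw [← setIntegral_condExp hm hδint hs]
    exact setIntegral_congr_ae (hm s hs) (hMAR.mono fun ω h _ => h)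
  -- indicator identity
  have indic : ∀ (A : Set ℝ) (C : Set (Fin m → ℝ)),
      (ε ⁻¹' A ∩ X ⁻¹' C).indicator (fun ω => π (X ω))
        = fun ω => (A.indicator (fun _ => (1:ℝ)) (ε ω)) * (C.indicator π (X ω)) := by
    intro A C; funext ω
    by_cases h1 : ε ω ∈ A <;> by_cases h2 : X ω ∈ C <;>
      simp [Set.indicator_apply, h1, h2]
  -- key integral identity
  have key : ∀ {A : Set ℝ} {C : Set (Fin m → ℝ)}, MeasurableSet A → MeasurableSet C →
      ∫ ω in ε ⁻¹' A ∩ X ⁻¹' C, δ ω ∂μ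
        = (μ (ε ⁻¹' A)).toReal * ∫ ω in X ⁻¹' C, δ ω ∂μ := by
    intro A C hA hC
    rw [hcond _ ((hεsub hA).inter (hXsub hC)), hcond _ (hXsub hC)]
    rw [← integral_indicator ((hε hA).inter (hX hC)), indic A C]
    have hf : AEStronglyMeasurable (fun ω => A.indicator (fun _ => (1:ℝ)) (ε ω)) μ :=
      ((measurable_const.indicator hA).comp hε).aestronglyMeasurable
    have hg : AEStronglyMeasurable (fun ω => C.indicator π (X ω)) μ :=
      ((hπ.indicator hC).comp hX).aestronglyMeasurable
    have hI : IndepFun (fun ω => A.indicator (fun _ => (1:ℝ)) (ε ω))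
        (fun ω => C.indicator π (X ω)) μ :=
      hindep.comp (measurable_const.indicator hA) (hπ.indicator hC)
    have hmul' : ∫ ω, A.indicator (fun _ => (1:ℝ)) (ε ω) * C.indicator π (X ω) ∂μ
        = (∫ ω, A.indicator (fun _ => (1:ℝ)) (ε ω) ∂μ)
          * ∫ ω, C.indicator π (X ω) ∂μ := hI.integral_fun_mul_eq_mul_integral hf hg
    rw [hmul']
    congr 1
    · have h1 : (fun ω => A.indicator (fun _ => (1:ℝ)) (ε ω))
          = (ε ⁻¹' A).indicator (fun _ => (1:ℝ)) := by
        funext ω; by_cases h : ε ω ∈ A <;> simp [Set.indicator_apply, h]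
      rw [h1, integral_indicator (hε hA)]
      simp [measureReal_def]
    · have h2 : (fun ω => C.indicator π (X ω))
          = (X ⁻¹' C).indicator (fun ω => π (X ω)) := by
        funext ω; by_cases h : X ω ∈ C <;> simp [Set.indicator_apply, h]
      rw [h2, integral_indicator (hX hC)]
  -- integrals of δ compute measures of intersection with {δ = 1}
  have meas1 : ∀ (S : Set Ω), MeasurableSet S →
      ∫ ω in S, δ ω ∂μ = (μ (S ∩ δ ⁻¹' ({1} : Set ℝ))).toReal := by
    intro S hS
    have hδe : δ = (δ ⁻¹' ({1} : Set ℝ)).indicator (fun _ => (1:ℝ)) := by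
      funext ω; rcases hδ01 ω with h | h <;> simp [Set.indicator_apply, h]
    conv_lhs => rw [hδe]
    rw [setIntegral_indicator (hδ (measurableSet_singleton 1))]
    simp [measureReal_def]
  have L1 : ∀ {A : Set ℝ} {C : Set (Fin m → ℝ)}, MeasurableSet A → MeasurableSet C →
      μ (ε ⁻¹' A ∩ X ⁻¹' C) = μ (ε ⁻¹' A) * μ (X ⁻¹' C) :=
    fun hA hC => hindep.measure_inter_preimage_eq_mul _ _ hA hC
  have L2 : ∀ {A : Set ℝ} {C : Set (Fin m → ℝ)}, MeasurableSet A → MeasurableSet C →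
      μ (ε ⁻¹' A ∩ (X ⁻¹' C ∩ δ ⁻¹' ({1} : Set ℝ)))
        = μ (ε ⁻¹' A) * μ (X ⁻¹' C ∩ δ ⁻¹' ({1} : Set ℝ)) := by
    intro A C hA hC
    have h := key hA hC
    rw [meas1 _ ((hε hA).inter (hX hC)), meas1 _ (hX hC), ← ENNReal.toReal_mul] at h
    rw [← Set.inter_assoc]
    exact (ENNReal.toReal_eq_toReal_iff' (measure_ne_top μ _)
      (ENNReal.mul_ne_top (measure_ne_top μ _) (measure_ne_top μ _))).mp h
  -- splitting along δ ∈ {0, 1}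
  have hsplit : ∀ (S : Set Ω), MeasurableSet S →
      μ (S ∩ δ ⁻¹' ({0} : Set ℝ)) + μ (S ∩ δ ⁻¹' ({1} : Set ℝ)) = μ S := by
    intro S hS
    have hU : (S ∩ δ ⁻¹' ({0} : Set ℝ)) ∪ (S ∩ δ ⁻¹' ({1} : Set ℝ)) = S := by
      ext ω
      simp only [Set.mem_union, Set.mem_inter_iff, Set.mem_preimage, Set.mem_singleton_iff]
      rcases hδ01 ω with h | h <;> simp [h]
    have hdisj : Disjoint (S ∩ δ ⁻¹' ({0} : Set ℝ)) (S ∩ δ ⁻¹' ({1} : Set ℝ)) := by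
      apply Set.disjoint_left.mpr
      rintro ω ⟨-, h0⟩ ⟨-, h1⟩
      simp only [Set.mem_preimage, Set.mem_singleton_iff] at h0 h1
      rw [h0] at h1; norm_num at h1
    rw [← measure_union hdisj (hS.inter (hδ (measurableSet_singleton 1))), hU]
  have L0 : ∀ {A : Set ℝ} {C : Set (Fin m → ℝ)}, MeasurableSet A → MeasurableSet C →
      μ (ε ⁻¹' A ∩ (X ⁻¹' C ∩ δ ⁻¹' ({0} : Set ℝ)))
        = μ (ε ⁻¹' A) * μ (X ⁻¹' C ∩ δ ⁻¹' ({0} : Set ℝ)) := by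
    intro A C hA hC
    have e1 := hsplit (ε ⁻¹' A ∩ X ⁻¹' C) ((hε hA).inter (hX hC))
    have e2 := hsplit (X ⁻¹' C) (hX hC)
    have e1' : μ (ε ⁻¹' A ∩ (X ⁻¹' C ∩ δ ⁻¹' ({0} : Set ℝ)))
        + μ (ε ⁻¹' A ∩ (X ⁻¹' C ∩ δ ⁻¹' ({1} : Set ℝ))) = μ (ε ⁻¹' A ∩ X ⁻¹' C) := by
      simpa [Set.inter_assoc] using e1
    have h2 : μ (ε ⁻¹' A ∩ X ⁻¹' C)
        = μ (ε ⁻¹' A) * μ (X ⁻¹' C ∩ δ ⁻¹' ({0} : Set ℝ))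
          + μ (ε ⁻¹' A) * μ (X ⁻¹' C ∩ δ ⁻¹' ({1} : Set ℝ)) := by
      rw [L1 hA hC, ← e2, mul_add]
    have heq := e1'.trans h2
    rw [L2 hA hC] at heq
    exact WithTop.add_right_cancel
      (ENNReal.mul_ne_top (measure_ne_top μ _) (measure_ne_top μ _)) heq
  -- the rectangle case
  have rect : ∀ (A : Set ℝ) (C : Set (Fin m → ℝ)) (D : Set ℝ),
      MeasurableSet A → MeasurableSet C → MeasurableSet D →
      μ (ε ⁻¹' A ∩ (X ⁻¹' C ∩ δ ⁻¹' D)) = μ (ε ⁻¹' A) * μ (X ⁻¹' C ∩ δ ⁻¹' D) := by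
    intro A C D hA hC hD
    by_cases h0 : (0:ℝ) ∈ D <;> by_cases h1 : (1:ℝ) ∈ D
    · have hDu : δ ⁻¹' D = Set.univ := by
        ext ω; simp only [Set.mem_preimage, Set.mem_univ, iff_true]
        rcases hδ01 ω with h | h <;> simp [h, h0, h1]
      rw [hDu]
      simpa using L1 hA hC
    · have hD0 : δ ⁻¹' D = δ ⁻¹' ({0} : Set ℝ) := by
        ext ω; simp only [Set.mem_preimage, Set.mem_singleton_iff]
        rcases hδ01 ω with h | h <;> simp [h, h0, h1]
      rw [hD0]; exact L0 hA hC
    · have hD1 : δ ⁻¹' D = δ ⁻¹' ({1} : Set ℝ) := by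
        ext ω; simp only [Set.mem_preimage, Set.mem_singleton_iff]
        rcases hδ01 ω with h | h <;> simp [h, h0, h1]
      rw [hD1]; exact L2 hA hC
    · have hDe : δ ⁻¹' D = ∅ := by
        ext ω; simp only [Set.mem_preimage, Set.mem_empty_iff_false, iff_false]
        rcases hδ01 ω with h | h <;> simp [h, h0, h1]
      rw [hDe]; simp
  -- assemble the independence via π-systems
  rw [IndepFun_iff_Indep]
  have hgm : Measurable (fun ω => (X ω, δ ω)) := hX.prodMk hδ
  refine IndepSets.indep (Measurable.comap_le hε) (Measurable.comap_le hgm)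
    (MeasurableSpace.isPiSystem_measurableSet.comap ε)
    (isPiSystem_prod.comap (fun ω => (X ω, δ ω)))
    ?_ ?_ ?_
  · conv_lhs => rw [← MeasurableSpace.generateFrom_measurableSet (α := ℝ)]
    rw [MeasurableSpace.comap_generateFrom]
    rfl
  · conv_lhs => rw [← generateFrom_prod]
    rw [MeasurableSpace.comap_generateFrom]
    rfl
  · rintro _ _ ⟨A, hA, rfl⟩ ⟨_, ⟨C, hC, D, hD, rfl⟩, rfl⟩
    rw [Set.mk_preimage_prod]
    refine Filter.Eventually.of_forall fun _ => ?_
    simpa using rect A C D hA hC hD
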